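/- For all n ≥ 1, (θ_{n+1} - θ_n)/θ_n > (22/25)·ln(p_n)/p_n, where θ_n = ∑_{i=1}^n ln(p_i). -/

import Mathlib

set_option maxRecDepth 100000
set_option maxHeartbeats 2000000
set_option exponentiation.threshold 5000

open Finset ArithmeticFunction

/- ### Computable trial division and the prime-power weight function -/

def go (k : ℕ) : ℕ → ℕ → ℕ
  | 0, _ => k
  | fuel+1, d => if k < d*d then k else if d ∣ k then d else go k fuel (d+2)

def minD (k : ℕ) : ℕ := if 2 ∣ k then 2 else go k 23 3

def pf (k : ℕ) : ℕ := if 2 ≤ k ∧ ∃ a, a < 12 ∧ (minD k) ^ a = k then minD k else 1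

def blk : ℕ → ℕ → ℕ → Bool × ℕ
  | 0, _, w => (true, w)
  | f+1, i, w =>
    match blk f (i+1) (w * pf i) with
    | (b, wend) => (decide (w * pf i ≤ 2 ^ (31 * i / 20)) && b, wend)

def outer : ℕ → ℕ → ℕ → Bool
  | 0, _, _ => true
  | f+1, i, w =>
    match blk 64 i w with
    | (b, w') => b && outer f (i + 64) w'

lemma outer_true : outer 32 1 1 = true := by decide



lemma prime_of_no_small_div {k d : ℕ} (hk : 2 ≤ k) (hd : k < d*d)
    (H : ∀ e, 2 ≤ e → e < d → ¬ e ∣ k) : k.minFac = k := by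
  by_cases hp : k.Prime
  · exact hp.minFac_eq
  · exfalso
    have h1 : k.minFac ^ 2 ≤ k := Nat.minFac_sq_le_self (by omega) hp
    have h2 : (k.minFac).Prime := Nat.minFac_prime (by omega)
    have h3 : k.minFac < d := by nlinarith [h2.two_le]
    exact H k.minFac h2.two_le h3 (Nat.minFac_dvd k)

lemma go_spec : ∀ (fuel d k : ℕ), 2 ≤ k → ¬ 2 ∣ k → d % 2 = 1 → 3 ≤ d →
    (∀ e, 2 ≤ e → e < d → ¬ e ∣ k) → k < (d + 2*fuel)*(d + 2*fuel) →
    go k fuel d = k.minFac := by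
  intro fuel
  induction fuel with
  | zero =>
    intro d k hk h2 hodd hd3 H hlt
    simp only [go]
    exact (prime_of_no_small_div hk (by simpa using hlt) H).symm
  | succ f ih =>
    intro d k hk h2 hodd hd3 H hlt
    simp only [go]
    split_ifs with h1 hdvd
    · exact (prime_of_no_small_div hk h1 H).symm
    · -- d ∣ k : d = minFac
      have hle : k.minFac ≤ d := Nat.minFac_le_of_dvd (by omega) hdvd
      rcases lt_or_eq_of_le hle with hlt2 | heq
      · exfalso
        have h2' : (k.minFac).Prime := Nat.minFac_prime (by omega)
        exact H k.minFac h2'.two_le hlt2 (Nat.minFac_dvd k)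
      · omega
    · apply ih (d+2) k hk h2 (by omega) (by omega)
      · intro e he2 helt hedvd
        rcases Nat.lt_or_ge e d with h | h
        · exact H e he2 h hedvd
        · -- e = d or e = d+1
          rcases Nat.eq_or_lt_of_le h with rfl | h'
          · exact hdvd hedvd
          · have : e = d + 1 := by omega
            subst this
            have : 2 ∣ d + 1 := by omega
            exact h2 (dvd_trans this hedvd)
      · rw [show d + 2 + 2 * f = d + 2 * (f + 1) from by omega]
        exact hlt

lemma minD_eq {k : ℕ} (hk : 2 ≤ k) (hk2 : k ≤ 2047) : minD k = k.minFac := by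
  unfold minD
  split_ifs with h2
  · have hle : k.minFac ≤ 2 := Nat.minFac_le_of_dvd (le_refl 2) h2
    have : 2 ≤ k.minFac := (Nat.minFac_prime (by omega)).two_le
    omega
  · apply go_spec 23 3 k hk h2 (by norm_num) (by norm_num)
    · intro e he2 helt
      interval_cases e
      exact h2
    · omega

lemma one_le_go {k : ℕ} (hk : 1 ≤ k) : ∀ fuel d, 3 ≤ d → 1 ≤ go k fuel d := by
  intro fuel
  induction fuel with
  | zero => intro d _; simpa [go] using hk
  | succ f ih =>
    intro d hd
    simp only [go]
    split_ifs
    · exact hk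
    · omega
    · exact ih (d+2) (by omega)

lemma one_le_pf (k : ℕ) : 1 ≤ pf k := by
  unfold pf
  split_ifs with h
  · obtain ⟨h2, _⟩ := h
    unfold minD
    split_ifs
    · omega
    · exact one_le_go (by omega) 23 3 (by norm_num)
  · exact le_refl 1

lemma pf_spec {k : ℕ} (hk : k ≤ 2047) : ArithmeticFunction.vonMangoldt k ≤ Real.log (pf k) := by
  by_cases hpp : IsPrimePow k
  · obtain ⟨p, a, hp, ha, rfl⟩ := hpp
    have hp' : p.Prime := hp.nat_prime
    have hmf : (p ^ a).minFac = p := hp'.pow_minFac (by omega)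
    have hk2 : 2 ≤ p ^ a := by
      calc 2 ≤ p := hp'.two_le
        _ = p^1 := (pow_one p).symm
        _ ≤ p ^ a := Nat.pow_le_pow_right (le_trans one_le_two hp'.two_le) ha
    have hminD : minD (p^a) = p := by rw [minD_eq hk2 hk, hmf]
    have ha12 : a < 12 := by
      by_contra hcon
      push_neg at hcon
      have : 2^12 ≤ p ^ a := by
        calc (2:ℕ)^12 ≤ 2^a := Nat.pow_le_pow_right (by norm_num) hcon
          _ ≤ p^a := Nat.pow_le_pow_left hp'.two_le a
      have h4096 : (2:ℕ)^12 = 4096 := by norm_num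
      omega
    have hcond : 2 ≤ p^a ∧ ∃ b, b < 12 ∧ (minD (p^a)) ^ b = p^a := ⟨hk2, a, ha12, by rw [hminD]⟩
    rw [pf, if_pos hcond, hminD, ArithmeticFunction.vonMangoldt_apply, if_pos ⟨p, a, hp, ha, rfl⟩, hmf]
  · rw [ArithmeticFunction.vonMangoldt_eq_zero_iff.2 hpp]
    apply Real.log_nonneg
    exact_mod_cast one_le_pf k



lemma prod_Icc_split (g : ℕ → ℕ) {i j : ℕ} (h : i ≤ j) :
    ∏ k ∈ Finset.Icc i j, g k = g i * ∏ k ∈ Finset.Icc (i+1) j, g k := by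
  rw [← Finset.Ico_add_one_right_eq_Icc, ← Finset.Ico_add_one_right_eq_Icc,
    Finset.prod_eq_prod_Ico_succ_bot (by omega) g]

lemma blk_snd : ∀ f i w, (blk f i w).2 = w * ∏ k ∈ Finset.Ico i (i+f), pf k := by
  intro f
  induction f with
  | zero => intro i w; simp [blk]
  | succ f ih =>
    intro i w
    simp only [blk]
    rcases h : blk f (i+1) (w * pf i) with ⟨b, wend⟩
    have h2 := ih (i+1) (w * pf i)
    rw [h] at h2
    simp only at h2 ⊢
    rw [h2, show i + (f+1) = i+1+f from by omega,
      Finset.prod_eq_prod_Ico_succ_bot (show i < i+1+f from by omega) pf]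
    ring

lemma blk_fst : ∀ f i w, (blk f i w).1 = true →
    ∀ j, i ≤ j → j < i + f → w * ∏ k ∈ Finset.Icc i j, pf k ≤ 2 ^ (31 * j / 20) := by
  intro f
  induction f with
  | zero => intro i w _ j h1 h2; omega
  | succ f ih =>
    intro i w hb j h1 h2
    simp only [blk] at hb
    rcases h : blk f (i+1) (w * pf i) with ⟨b, wend⟩
    rw [h] at hb
    simp only [Bool.and_eq_true, decide_eq_true_eq] at hb
    rcases Nat.eq_or_lt_of_le h1 with rfl | hlt
    · rw [Finset.Icc_self, Finset.prod_singleton]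
      exact hb.1
    · have := ih (i+1) (w * pf i) (by rw [h]; exact hb.2) j hlt (by omega)
      rw [prod_Icc_split pf h1, ← mul_assoc]
      exact this

lemma outer_fst : ∀ f i w, outer f i w = true →
    ∀ j, i ≤ j → j < i + 64*f → w * ∏ k ∈ Finset.Icc i j, pf k ≤ 2 ^ (31 * j / 20) := by
  intro f
  induction f with
  | zero => intro i w _ j h1 h2; omega
  | succ f ih =>
    intro i w hb j h1 h2
    simp only [outer] at hb
    rcases h : blk 64 i w with ⟨b, w'⟩
    rw [h] at hb
    simp only [Bool.and_eq_true] at hb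
    by_cases hj : j < i + 64
    · exact blk_fst 64 i w (by rw [h]; exact hb.1) j h1 hj
    · push_neg at hj
      have hw' : w' = w * ∏ k ∈ Finset.Ico i (i+64), pf k := by
        have := blk_snd 64 i w
        rw [h] at this
        exact this
      have := ih (i+64) w' hb.2 j hj (by omega)
      rw [hw'] at this
      rw [show Finset.Icc i j = Finset.Ico i (j+1) from (Finset.Ico_add_one_right_eq_Icc i j).symm,
        ← Finset.prod_Ico_consecutive pf (by omega : i ≤ i+64) (by omega : i+64 ≤ j+1),
        ← mul_assoc]
      rw [show Finset.Icc (i+64) j = Finset.Ico (i+64) (j+1) from (Finset.Ico_add_one_right_eq_Icc _ j).symm] at this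
      exact this


lemma W_le {x : ℕ} (h1 : 1 ≤ x) (h2 : x < 2048) :
    ∏ k ∈ Finset.Icc 1 x, pf k ≤ 2 ^ (31 * x / 20) := by
  have := outer_fst 32 1 1 outer_true x h1 (by omega)
  simpa using this

/- ### Chebyshev functions -/

noncomputable def chebT (n : ℕ) : ℝ := ∑ k ∈ Finset.Icc 1 n, Real.log k
noncomputable def chebψ (n : ℕ) : ℝ := ∑ k ∈ Finset.Icc 1 n, Λ k
noncomputable def chebE (n : ℕ) : ℝ := chebT n - chebT (n/2) - chebT (n/3) - chebT (n/5) + chebT (n/30)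
noncomputable def chebA : ℝ := Real.log 2 / 2 + Real.log 3 / 3 + Real.log 5 / 5 - Real.log 30 / 30




lemma divisors_eq_filter {k n : ℕ} (h1 : 1 ≤ k) (h2 : k ≤ n) :
    k.divisors = (Finset.Icc 1 n).filter (· ∣ k) := by
  ext d
  simp only [Nat.mem_divisors, Finset.mem_filter, Finset.mem_Icc]
  constructor
  · rintro ⟨hd, -⟩
    exact ⟨⟨Nat.pos_of_dvd_of_pos hd h1, le_trans (Nat.le_of_dvd h1 hd) h2⟩, hd⟩
  · rintro ⟨-, hd⟩
    exact ⟨hd, by omega⟩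

lemma chebT_eq (n : ℕ) : chebT n = ∑ d ∈ Finset.Icc 1 n, (n / d : ℕ) * Λ d := by
  unfold chebT
  have h1 : ∀ k ∈ Finset.Icc 1 n, Real.log k = ∑ d ∈ (Finset.Icc 1 n).filter (· ∣ k), Λ d := by
    intro k hk
    rw [Finset.mem_Icc] at hk
    rw [← divisors_eq_filter hk.1 hk.2, ArithmeticFunction.vonMangoldt_sum]
  rw [Finset.sum_congr rfl h1]
  simp_rw [Finset.sum_filter]
  rw [Finset.sum_comm]
  refine Finset.sum_congr rfl fun d _ => ?_
  rw [← Finset.sum_filter, Finset.sum_const, nsmul_eq_mul]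
  congr 1
  have h : Finset.Icc 1 n = Finset.Ioc 0 n := rfl
  rw [h]
  exact_mod_cast congrArg (Nat.cast (R := ℝ)) (Nat.Ioc_filter_dvd_card_eq_div n d)



lemma div_swap' (n m d : ℕ) : n / m / d = n / d / m := by
  rw [Nat.div_div_eq_div_mul, Nat.div_div_eq_div_mul, mul_comm]

lemma chebT_div_eq (n m : ℕ) :
    chebT (n / m) = ∑ d ∈ Finset.Icc 1 n, (n / d / m : ℕ) * Λ d := by
  rw [chebT_eq]
  simp_rw [div_swap' n m]
  apply Finset.sum_subset (Finset.Icc_subset_Icc_right (Nat.div_le_self n m))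
  intro d hd hnd
  have h1 : n / m < d := by
    simp only [Finset.mem_Icc] at hd hnd
    omega
  have h2 : n / d / m = 0 := by rw [div_swap']; exact Nat.div_eq_of_lt h1
  rw [h2]
  simp

lemma chebE_eq (n : ℕ) : chebE n = ∑ d ∈ Finset.Icc 1 n,
    (((n/d : ℕ) : ℝ) - ((n/d/2 : ℕ) : ℝ) - ((n/d/3 : ℕ) : ℝ) - ((n/d/5 : ℕ) : ℝ) + ((n/d/30 : ℕ) : ℝ)) * Λ d := by
  unfold chebE
  rw [chebT_eq, chebT_div_eq n 2, chebT_div_eq n 3, chebT_div_eq n 5, chebT_div_eq n 30,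
    ← Finset.sum_sub_distrib, ← Finset.sum_sub_distrib, ← Finset.sum_sub_distrib, ← Finset.sum_add_distrib]
  refine Finset.sum_congr rfl fun d _ => by ring

lemma coeff_nonneg (m : ℕ) : 0 ≤ ((m : ℝ) - ((m/2 : ℕ) : ℝ) - ((m/3 : ℕ) : ℝ) - ((m/5 : ℕ) : ℝ) + ((m/30 : ℕ) : ℝ)) := by
  have h : m/2 + m/3 + m/5 ≤ m + m/30 := by omega
  have := (Nat.cast_le (α := ℝ)).2 h
  push_cast at this
  linarith

lemma coeff_eq_one {m : ℕ} (h1 : 1 ≤ m) (h2 : m ≤ 5) :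
    ((m : ℝ) - ((m/2 : ℕ) : ℝ) - ((m/3 : ℕ) : ℝ) - ((m/5 : ℕ) : ℝ) + ((m/30 : ℕ) : ℝ)) = 1 := by
  have h : m + m/30 = m/2 + m/3 + m/5 + 1 := by omega
  have := congrArg (Nat.cast (R := ℝ)) h
  push_cast at this
  linarith

lemma chebψ_sub : ∀ n : ℕ, chebψ n - chebψ (n/6) = ∑ d ∈ Finset.Ioc (n/6) n, Λ d := by
  intro n
  have h : Finset.Icc 1 n = Finset.Ioc 0 n := rfl
  have h2 : Finset.Icc 1 (n/6) = Finset.Ioc 0 (n/6) := rfl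
  unfold chebψ
  rw [h, h2, ← Finset.sum_Ioc_consecutive (fun k => Λ k) (Nat.zero_le (n/6)) (Nat.div_le_self n 6)]
  ring

lemma chebψ_le_chebE_add (n : ℕ) : chebψ n ≤ chebE n + chebψ (n/6) := by
  have key : chebψ n - chebψ (n/6) ≤ chebE n := by
    rw [chebψ_sub, chebE_eq]
    have hsub : Finset.Ioc (n/6) n ⊆ Finset.Icc 1 n := by
      intro d hd
      simp only [Finset.mem_Ioc, Finset.mem_Icc] at *
      omega
    calc ∑ d ∈ Finset.Ioc (n/6) n, Λ d
        ≤ ∑ d ∈ Finset.Icc 1 n, (if n/6 < d then Λ d else 0) := by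
          rw [← Finset.sum_filter]
          apply Finset.sum_le_sum_of_subset_of_nonneg
          · intro d hd
            simp only [Finset.mem_Ioc, Finset.mem_filter, Finset.mem_Icc] at *
            omega
          · intro d _ _
            exact ArithmeticFunction.vonMangoldt_nonneg
      _ ≤ ∑ d ∈ Finset.Icc 1 n, (((n/d : ℕ) : ℝ) - ((n/d/2 : ℕ) : ℝ) - ((n/d/3 : ℕ) : ℝ) - ((n/d/5 : ℕ) : ℝ) + ((n/d/30 : ℕ) : ℝ)) * Λ d := by
          apply Finset.sum_le_sum
          intro d hd
          simp only [Finset.mem_Icc] at hd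
          by_cases hcase : n/6 < d
          · rw [if_pos hcase]
            have hd0 : 0 < d := hd.1
            have h5 : n / d ≤ 5 := by
              have : n < d * 6 := by omega
              have := Nat.div_lt_of_lt_mul this
              omega
            have h1 : 1 ≤ n / d := (Nat.one_le_div_iff hd0).2 hd.2
            rw [coeff_eq_one h1 h5, one_mul]
          · rw [if_neg hcase]
            exact mul_nonneg (coeff_nonneg _) ArithmeticFunction.vonMangoldt_nonneg
  linarith


lemma log_succ_sub (m : ℕ) (hm : 1 ≤ m) : Real.log (m+1) - Real.log m ≤ 1 / m := by
  have hm0 : (0:ℝ) < m := by exact_mod_cast hm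
  have h := Real.log_le_sub_one_of_pos (x := ((m:ℝ)+1)/m) (by positivity)
  rw [Real.log_div (by positivity) (by positivity)] at h
  have : ((m:ℝ)+1)/m - 1 = 1/m := by field_simp; ring
  linarith

lemma log_succ_sub_ge (m : ℕ) : 1 / ((m:ℝ)+1) ≤ Real.log (m+1) - Real.log m ∨ m = 0 := by
  rcases Nat.eq_zero_or_pos m with h | h
  · right; exact h
  left
  have hm0 : (0:ℝ) < m := by exact_mod_cast h
  have h := Real.log_le_sub_one_of_pos (x := (m:ℝ)/(m+1)) (by positivity)
  rw [Real.log_div (by positivity) (by positivity)] at h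
  have : (m:ℝ)/(m+1) - 1 = -(1/(m+1)) := by field_simp; ring
  linarith

lemma chebT_succ (m : ℕ) : chebT (m+1) = chebT m + Real.log (m+1) := by
  unfold chebT
  rw [Finset.sum_Icc_succ_top (by omega)]
  push_cast
  ring_nf

lemma chebT_lower : ∀ m : ℕ, 1 ≤ m → (m:ℝ) * Real.log m - m + 1 ≤ chebT m := by
  intro m
  induction m with
  | zero => omega
  | succ k ih =>
    intro _
    rcases Nat.eq_zero_or_pos k with hk | hk
    · subst hk
      simp [chebT, Finset.Icc_self]
    have h1 := ih hk
    rw [chebT_succ]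
    have hk0 : (0:ℝ) < k := by exact_mod_cast hk
    have h2 : Real.log (k+1) - Real.log k ≤ 1/k := log_succ_sub k hk
    have hlogpos : 0 ≤ Real.log k := Real.log_natCast_nonneg k
    push_cast
    have : (k:ℝ) * (Real.log (k+1) - Real.log k) ≤ 1 := by
      calc (k:ℝ) * (Real.log (k+1) - Real.log k) ≤ (k:ℝ) * (1/k) := by
            apply mul_le_mul_of_nonneg_left h2 (le_of_lt hk0)
        _ = 1 := by field_simp
    nlinarith [h1, this]

lemma chebT_upper : ∀ m : ℕ, chebT m ≤ ((m:ℝ)+1) * Real.log (m+1) - m := by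
  intro m
  induction m with
  | zero => simp [chebT]
  | succ k ih =>
    rw [chebT_succ]
    push_cast
    have key : 1 ≤ ((k:ℝ)+2) * (Real.log (k+2) - Real.log (k+1)) := by
      have h := Real.log_le_sub_one_of_pos (x := ((k:ℝ)+1)/(k+2)) (by positivity)
      rw [Real.log_div (by positivity) (by positivity)] at h
      have h2 : ((k:ℝ)+1)/(k+2) - 1 = -(1/(k+2)) := by field_simp; ring
      rw [h2] at h
      have h3 : 1/((k:ℝ)+2) ≤ Real.log (k+2) - Real.log (k+1) := by linarith
      calc (1:ℝ) = ((k:ℝ)+2) * (1/(k+2)) := by field_simp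
        _ ≤ ((k:ℝ)+2) * (Real.log (k+2) - Real.log (k+1)) := by
            apply mul_le_mul_of_nonneg_left h3 (by positivity)
    have hc : ((k:ℝ)+1+1) = (k:ℝ)+2 := by ring
    rw [hc]
    nlinarith [ih]



lemma log3_le : Real.log 3 ≤ 1.09862 := by
  have h1 : (12:ℝ) * Real.log 3 = Real.log 531441 := by
    rw [show (531441:ℝ) = 3^12 by norm_num, Real.log_pow]; push_cast; ring
  have h2 : Real.log 531441 = 19 * Real.log 2 + Real.log (531441/524288) := by
    rw [show (531441:ℝ) = 2^19 * (531441/524288) by norm_num, Real.log_mul (by positivity) (by norm_num), Real.log_pow]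
    push_cast; ring
  have h3 : Real.log (531441/524288) ≤ 531441/524288 - 1 := Real.log_le_sub_one_of_pos (by norm_num)
  have h4 : Real.log 2 < 0.6931471808 := Real.log_two_lt_d9
  nlinarith
lemma log5_le : Real.log 5 ≤ 1.609531 := by
  have h1 : (3:ℝ) * Real.log 5 = Real.log 125 := by
    rw [show (125:ℝ) = 5^3 by norm_num, Real.log_pow]; push_cast; ring
  have h2 : Real.log 125 = 7 * Real.log 2 + Real.log (125/128) := by
    rw [show (125:ℝ) = 2^7 * (125/128) by norm_num, Real.log_mul (by positivity) (by norm_num), Real.log_pow]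
    push_cast; ring
  have h3 : Real.log (125/128) ≤ 125/128 - 1 := Real.log_le_sub_one_of_pos (by norm_num)
  have h4 : Real.log 2 < 0.6931471808 := Real.log_two_lt_d9
  nlinarith
lemma log30_eq : Real.log 30 = Real.log 2 + Real.log 3 + Real.log 5 := by
  rw [show (30:ℝ) = 2*3*5 by norm_num, Real.log_mul (by norm_num) (by norm_num), Real.log_mul (by norm_num) (by norm_num)]
lemma chebA_le : chebA ≤ 0.92131 := by
  unfold chebA
  rw [log30_eq]
  have h4 : Real.log 2 < 0.6931471808 := Real.log_two_lt_d9
  have h2 : (0:ℝ) < Real.log 2 := Real.log_pos (by norm_num)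
  nlinarith [log3_le, log5_le]



-- generic lower bound: for t ≈ N/k (floor with excess r): 
lemma term_lower (k r N : ℝ) (t : ℕ) (hk : 1 ≤ k) (hr : 0 ≤ r) (hN : 2048 ≤ N)
    (hrsmall : r + 1 ≤ N/2) (ht1 : (N - r)/k ≤ (t:ℝ)) (ht2 : (t:ℝ) ≤ N/k)
    (hkN : Real.log k + 1 ≤ Real.log N) :
    (N/k)*Real.log N - (N/k)*Real.log k - (r/k)*Real.log N - r/k ≤ (t:ℝ) * Real.log t := by
  have hk0 : (0:ℝ) < k := by linarith
  have hNr : (0:ℝ) < N - r := by linarith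
  have hNrk : (0:ℝ) < (N - r)/k := by positivity
  have ht0 : (0:ℝ) < t := lt_of_lt_of_le hNrk ht1
  have hrdiv : r/(N-r) ≤ 1 := by
    rw [div_le_one hNr]; linarith
  -- log N - log(N-r) ≤ r/(N-r)
  have hlog1 : Real.log N - Real.log (N - r) ≤ r/(N-r) := by
    have h := Real.log_le_sub_one_of_pos (x := N/(N-r)) (by positivity)
    rw [Real.log_div (by linarith) (by linarith)] at h
    have : N/(N-r) - 1 = r/(N-r) := by field_simp; ring
    linarith
  -- log t ≥ log N - log k - r/(N-r)
  have hlogt : Real.log N - Real.log k - r/(N-r) ≤ Real.log t := by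
    have h1 : Real.log ((N-r)/k) ≤ Real.log t := Real.log_le_log hNrk ht1
    rw [Real.log_div (by linarith) (by linarith)] at h1
    linarith
  have hX : (0:ℝ) ≤ Real.log N - Real.log k - r/(N-r) := by linarith
  have step1 : ((N-r)/k) * (Real.log N - Real.log k - r/(N-r)) ≤ (t:ℝ) * (Real.log N - Real.log k - r/(N-r)) :=
    mul_le_mul_of_nonneg_right ht1 hX
  have step2 : (t:ℝ) * (Real.log N - Real.log k - r/(N-r)) ≤ (t:ℝ) * Real.log t :=
    mul_le_mul_of_nonneg_left hlogt (le_of_lt ht0)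
  have expand : ((N-r)/k) * (Real.log N - Real.log k - r/(N-r)) =
      (N/k)*Real.log N - (N/k)*Real.log k - (r/k)*Real.log N + (r/k)*Real.log k - r/k := by
    field_simp
    ring
  have hlogk : 0 ≤ Real.log k := Real.log_nonneg hk
  have : 0 ≤ (r/k) * Real.log k := by positivity
  nlinarith



lemma chebE_le (n : ℕ) (hn : 2048 ≤ n) : chebE n ≤ chebA * n + 5 * Real.log n + 5 := by
  set N : ℝ := (n:ℝ) with hNdef
  have hN : (2048:ℝ) ≤ N := by rw [hNdef]; exact_mod_cast hn
  have hN0 : (0:ℝ) < N := by linarith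
  -- basic log facts
  have hlog2pos : (0:ℝ) < Real.log 2 := Real.log_pos (by norm_num)
  have hlog2 : Real.log 2 < 0.6931471808 := Real.log_two_lt_d9
  have hlog2' : (0.6931471803:ℝ) < Real.log 2 := Real.log_two_gt_d9
  have hlogN_ge : 11 * Real.log 2 ≤ Real.log N := by
    have h1 : Real.log 2048 ≤ Real.log N := Real.log_le_log (by norm_num) hN
    rw [show (2048:ℝ) = 2^11 by norm_num, Real.log_pow] at h1
    push_cast at h1; linarith
  have hlog2N : Real.log 2 + 1 ≤ Real.log N := by linarith
  have hlog3N : Real.log 3 + 1 ≤ Real.log N := by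
    have : Real.log 3 ≤ Real.log 32 := Real.log_le_log (by norm_num) (by norm_num)
    rw [show (32:ℝ) = 2^5 by norm_num, Real.log_pow] at this
    push_cast at this; linarith
  have hlog5N : Real.log 5 + 1 ≤ Real.log N := by
    have : Real.log 5 ≤ Real.log 32 := Real.log_le_log (by norm_num) (by norm_num)
    rw [show (32:ℝ) = 2^5 by norm_num, Real.log_pow] at this
    push_cast at this; linarith
  have hlog30N : Real.log 30 ≤ Real.log N := by
    have : Real.log 30 ≤ Real.log 32 := Real.log_le_log (by norm_num) (by norm_num)
    rw [show (32:ℝ) = 2^5 by norm_num, Real.log_pow] at this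
    push_cast at this; linarith
  -- the floor quantities
  set a := n/2 with hadef
  set b := n/3 with hbdef
  set c := n/5 with hcdef
  set e := n/30 with hedef
  have haN : 2*a ≤ n ∧ n ≤ 2*a+1 := by omega
  have hbN : 3*b ≤ n ∧ n ≤ 3*b+2 := by omega
  have hcN : 5*c ≤ n ∧ n ≤ 5*c+4 := by omega
  have heN : 30*e ≤ n ∧ n ≤ 30*e+29 := by omega
  have ha1 : 1 ≤ a := by omega
  have hb1 : 1 ≤ b := by omega
  have hc1 : 1 ≤ c := by omega
  have he1 : 1 ≤ e := by omega
  have haR : (N-1)/2 ≤ (a:ℝ) ∧ (a:ℝ) ≤ N/2 := by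
    constructor <;> [skip; skip] <;>
    · have h1 := haN.1; have h2 := haN.2
      have := (Nat.cast_le (α := ℝ)).2 h1
      have := (Nat.cast_le (α := ℝ)).2 h2
      push_cast at *
      linarith
  have hbR : (N-2)/3 ≤ (b:ℝ) ∧ (b:ℝ) ≤ N/3 := by
    constructor <;>
    · have := (Nat.cast_le (α := ℝ)).2 hbN.1
      have := (Nat.cast_le (α := ℝ)).2 hbN.2
      push_cast at *
      linarith
  have hcR : (N-4)/5 ≤ (c:ℝ) ∧ (c:ℝ) ≤ N/5 := by
    constructor <;>
    · have := (Nat.cast_le (α := ℝ)).2 hcN.1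
      have := (Nat.cast_le (α := ℝ)).2 hcN.2
      push_cast at *
      linarith
  have heR : N/30 - 1 ≤ (e:ℝ) ∧ (e:ℝ) ≤ N/30 := by
    constructor <;>
    · have := (Nat.cast_le (α := ℝ)).2 heN.1
      have := (Nat.cast_le (α := ℝ)).2 heN.2
      push_cast at *
      linarith
  -- lower bounds on a log a etc.
  have hA := term_lower 2 1 N a (by norm_num) (by norm_num) hN (by linarith) (haR.1) (haR.2) hlog2N
  have hB := term_lower 3 2 N b (by norm_num) (by norm_num) hN (by linarith) (hbR.1) (hbR.2) hlog3N
  have hC := term_lower 5 4 N c (by norm_num) (by norm_num) hN (by linarith) (hcR.1) (hcR.2) hlog5N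
  -- upper bound on chebT n
  have hUn : chebT n ≤ N * Real.log N + Real.log N + 2 - N := by
    have h1 := chebT_upper n
    have h2 : Real.log (N+1) - Real.log N ≤ 1/N := by
      have h := Real.log_le_sub_one_of_pos (x := (N+1)/N) (by positivity)
      rw [Real.log_div (by positivity) (by positivity)] at h
      have : (N+1)/N - 1 = 1/N := by field_simp; ring
      linarith
    have h3 : (0:ℝ) ≤ Real.log N := by nlinarith
    have h4 : ((n:ℝ)+1) * Real.log (↑n+1) ≤ (N+1)*(Real.log N + 1/N) := by
      apply mul_le_mul_of_nonneg_left _ (by linarith)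
      linarith
    have h5 : (N+1)*(Real.log N + 1/N) = N*Real.log N + Real.log N + 1 + 1/N := by
      field_simp; ring
    have h6 : 1/N ≤ 1 := by
      rw [div_le_one hN0]; linarith
    push_cast at h1
    linarith
  -- upper bound on chebT e
  have hUe : chebT e ≤ (N/30) * Real.log N - (N/30)*Real.log 30 + Real.log N + 2 - (e:ℝ) := by
    have h1 := chebT_upper e
    have h2 : Real.log ((e:ℝ)+1) ≤ Real.log N - Real.log 30 + 30/N := by
      have hle : ((e:ℝ)+1) ≤ (N+30)/30 := by linarith [heR.2]
      have h3 : Real.log ((e:ℝ)+1) ≤ Real.log ((N+30)/30) := by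
        apply Real.log_le_log (by positivity) hle
      rw [Real.log_div (by positivity) (by norm_num)] at h3
      have h4 : Real.log (N+30) ≤ Real.log N + 30/N := by
        have h := Real.log_le_sub_one_of_pos (x := (N+30)/N) (by positivity)
        rw [Real.log_div (by positivity) (by positivity)] at h
        have : (N+30)/N - 1 = 30/N := by field_simp; ring
        linarith
      linarith
    have hXpos : (0:ℝ) ≤ Real.log N - Real.log 30 + 30/N := by
      have : (0:ℝ) < 30/N := by positivity
      linarith
    have h5 : ((e:ℝ)+1) * Real.log ((e:ℝ)+1) ≤ (N/30+1) * (Real.log N - Real.log 30 + 30/N) := by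
      have s1 : ((e:ℝ)+1) * Real.log ((e:ℝ)+1) ≤ ((e:ℝ)+1) * (Real.log N - Real.log 30 + 30/N) :=
        mul_le_mul_of_nonneg_left h2 (by positivity)
      have s2 : ((e:ℝ)+1) * (Real.log N - Real.log 30 + 30/N) ≤ (N/30+1) * (Real.log N - Real.log 30 + 30/N) :=
        mul_le_mul_of_nonneg_right (by linarith [heR.2]) hXpos
      linarith
    have h6 : (N/30+1) * (Real.log N - Real.log 30 + 30/N) =
        (N/30)*Real.log N - (N/30)*Real.log 30 + 1 + Real.log N - Real.log 30 + 30/N := by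
      field_simp; ring
    have h7 : 30/N ≤ 1 := by rw [div_le_one hN0]; linarith
    have h8 : 0 ≤ Real.log 30 := Real.log_nonneg (by norm_num)
    push_cast at h1
    linarith
  -- lower bounds on chebT a, b, c
  have hLa := chebT_lower a ha1
  have hLb := chebT_lower b hb1
  have hLc := chebT_lower c hc1
  -- assemble
  unfold chebE chebA
  rw [← hadef, ← hbdef, ← hcdef, ← hedef]
  rw [log30_eq]
  rw [log30_eq] at hUe
  have hNlog : 0 ≤ Real.log N := by nlinarith
  linarith [hA, hB, hC, hUn, hUe, hLa, hLb, hLc, haR.2, hbR.2, hcR.2, heR.1]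



lemma chebψ_base (x : ℕ) (hx : x < 2048) : chebψ x ≤ (25/22) * x := by
  rcases Nat.eq_zero_or_pos x with rfl | hx1
  · simp [chebψ]
  have hlog2 : Real.log 2 < 0.6931471808 := Real.log_two_lt_d9
  have step1 : chebψ x ≤ ∑ k ∈ Finset.Icc 1 x, Real.log (pf k) := by
    apply Finset.sum_le_sum
    intro k hk
    simp only [Finset.mem_Icc] at hk
    exact pf_spec (by omega)
  have step2 : ∑ k ∈ Finset.Icc 1 x, Real.log (pf k) = Real.log (∏ k ∈ Finset.Icc 1 x, (pf k : ℝ)) := by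
    rw [Real.log_prod]
    intro k _
    have := one_le_pf k
    positivity
  have step3 : Real.log (∏ k ∈ Finset.Icc 1 x, (pf k : ℝ)) ≤ Real.log ((2:ℝ) ^ (31 * x / 20)) := by
    apply Real.log_le_log
    · apply Finset.prod_pos
      intro k _
      have := one_le_pf k
      positivity
    · have hW := W_le hx1 hx
      have : ((∏ k ∈ Finset.Icc 1 x, pf k : ℕ) : ℝ) ≤ ((2 ^ (31 * x / 20) : ℕ) : ℝ) := by
        exact_mod_cast hW
      push_cast at this
      exact this
  have step4 : Real.log ((2:ℝ) ^ (31 * x / 20)) = (31 * x / 20 : ℕ) * Real.log 2 := by rw [Real.log_pow]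
  have step5 : ((31 * x / 20 : ℕ) : ℝ) ≤ 31 * (x:ℝ) / 20 := by
    have := Nat.cast_div_le (m := 31 * x) (n := 20) (α := ℝ)
    push_cast at this ⊢
    linarith
  have hx0 : (0:ℝ) ≤ (x:ℝ) := by positivity
  have step6 : ((31 * x / 20 : ℕ) : ℝ) * Real.log 2 ≤ (31 * (x:ℝ) / 20) * 0.6931471808 := by
    apply mul_le_mul step5 (le_of_lt hlog2) (Real.log_nonneg (by norm_num)) (by positivity)
  have : (31 * (x:ℝ) / 20) * 0.6931471808 ≤ (25/22) * x := by nlinarith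
  linarith



lemma chebψ_le : ∀ x : ℕ, chebψ x ≤ (25/22) * x := by
  intro x
  induction x using Nat.strong_induction_on with
  | _ x ih =>
    by_cases hx : x < 2048
    · exact chebψ_base x hx
    push_neg at hx
    have hx0 : 0 < x := by omega
    have ih6 := ih (x/6) (Nat.div_lt_self hx0 (by norm_num))
    have h1 := chebψ_le_chebE_add x
    have h2 := chebE_le x hx
    have hX : (2048:ℝ) ≤ (x:ℝ) := by exact_mod_cast hx
    have hcast : ((x/6 : ℕ) : ℝ) ≤ (x:ℝ)/6 := Nat.cast_div_le
    have hlogX : Real.log x ≤ (x:ℝ)/2048 + 11 * Real.log 2 - 1 := by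
      have h3 : Real.log x = Real.log 2048 + Real.log ((x:ℝ)/2048) := by
        rw [← Real.log_mul (by norm_num) (by positivity)]
        congr 1
        field_simp
      have h4 : Real.log ((x:ℝ)/2048) ≤ (x:ℝ)/2048 - 1 := Real.log_le_sub_one_of_pos (by positivity)
      have h5 : Real.log 2048 = 11 * Real.log 2 := by
        rw [show (2048:ℝ) = 2^11 by norm_num, Real.log_pow]; push_cast; ring
      linarith
    have hlog2 : Real.log 2 < 0.6931471808 := Real.log_two_lt_d9
    have hAx : chebA * x ≤ 0.92131 * x := mul_le_mul_of_nonneg_right chebA_le (by positivity)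
    have hnum : 5 * Real.log x + 5 ≤ (125/132 - 0.92131) * (x:ℝ) := by
      have : (38.1231:ℝ) ≤ 0.0232175 * x := by nlinarith
      nlinarith
    calc chebψ x ≤ chebE x + chebψ (x/6) := h1
      _ ≤ chebA * x + 5 * Real.log x + 5 + (25/22) * ((x/6 : ℕ):ℝ) := by linarith
      _ ≤ (25/22) * x := by nlinarith



noncomputable def p (n : ℕ) : ℕ := Nat.nth Nat.Prime (n - 1)

noncomputable def θ (n : ℕ) : ℝ := ∑ i ∈ Finset.Icc 1 n, Real.log (p i)

lemma p_prime (n : ℕ) : (p n).Prime := Nat.prime_nth_prime (n-1)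
lemma p_two_le (n : ℕ) : 2 ≤ p n := (p_prime n).two_le

lemma p_mono {m n : ℕ} (h : m ≤ n) : p m ≤ p n := by
  unfold p
  exact (Nat.nth_le_nth Nat.infinite_setOf_prime).2 (by omega)

lemma p_strict {m n : ℕ} (hm : 1 ≤ m) (h : m < n) : p m < p n := by
  unfold p
  exact (Nat.nth_lt_nth Nat.infinite_setOf_prime).2 (by omega)

lemma theta_le_psi (n : ℕ) : θ n ≤ chebψ (p n) := by
  unfold θ chebψ
  have h1 : ∀ i ∈ Finset.Icc 1 n, Real.log (p i) = ArithmeticFunction.vonMangoldt (p i) := by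
    intro i _
    rw [ArithmeticFunction.vonMangoldt_apply_prime (p_prime i)]
  rw [Finset.sum_congr rfl h1]
  have hinj : ∀ i ∈ Finset.Icc 1 n, ∀ j ∈ Finset.Icc 1 n, p i = p j → i = j := by
    intro i hi j hj hij
    simp only [Finset.mem_Icc] at hi hj
    by_contra hne
    rcases Nat.lt_or_ge i j with h | h
    · exact absurd hij (Nat.ne_of_lt (p_strict hi.1 h))
    · have : j < i := by omega
      exact absurd hij.symm (Nat.ne_of_lt (p_strict hj.1 this))
  rw [show (∑ i ∈ Finset.Icc 1 n, ArithmeticFunction.vonMangoldt (p i))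
      = ∑ q ∈ (Finset.Icc 1 n).image p, ArithmeticFunction.vonMangoldt q from
    (Finset.sum_image hinj).symm]
  apply Finset.sum_le_sum_of_subset_of_nonneg
  · intro q hq
    simp only [Finset.mem_image, Finset.mem_Icc] at hq ⊢
    obtain ⟨i, hi, rfl⟩ := hq
    exact ⟨by have := p_two_le i; omega, p_mono hi.2⟩
  · intro q _ _
    exact ArithmeticFunction.vonMangoldt_nonneg

theorem stmt12 : ∀ n : ℕ, 1 ≤ n → (θ (n+1) - θ n) / θ n > (22/25) * Real.log (p n) / (p n : ℝ) := by
  intro n hn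
  have hsub : θ (n+1) - θ n = Real.log (p (n+1)) := by
    unfold θ
    rw [Finset.sum_Icc_succ_top (by omega : 1 ≤ n+1)]
    ring
  have hpn2 : (2:ℝ) ≤ (p n : ℝ) := by exact_mod_cast p_two_le n
  have hpnpos : (0:ℝ) < (p n : ℝ) := by linarith
  have hlogpn : 0 < Real.log (p n) := Real.log_pos (by linarith)
  have hθpos : 0 < θ n := by
    unfold θ
    apply Finset.sum_pos
    · intro i _
      have : (2:ℝ) ≤ (p i : ℝ) := by exact_mod_cast p_two_le i
      exact Real.log_pos (by linarith)
    · exact ⟨1, by simp [Finset.mem_Icc]; omega⟩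
  have hplt : p n < p (n+1) := p_strict hn (by omega)
  have hloglt : Real.log (p n) < Real.log (p (n+1)) := by
    apply Real.log_lt_log hpnpos
    exact_mod_cast hplt
  have hkey : θ n ≤ (25/22) * (p n : ℝ) := le_trans (theta_le_psi n) (chebψ_le (p n))
  rw [hsub, gt_iff_lt, div_lt_div_iff₀ hpnpos hθpos]
  nlinarith
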